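/- The n-th root of the 2n-th Motzkin number converges to 9; i.e. Filter.Tendsto (fun n : ℕ => ((∑ t in Finset.range (2*n+1), (2*n).choose (2*t) * catalan t : ℕ) : ℝ) ^ ((n : ℝ)⁻¹)) Filter.atTop (nhds 9). Equivalently, the cardinality of the Motzkin monoid Mo_n, which equals the 2n-th Motzkin number, grows exponentially with factor 9. -/

import Mathlib

open Finset

lemma even_sum_pow (n : ℕ) :
    2 * (∑ t ∈ range (n+1), (2*n).choose (2*t) * 4^t) = 9^n + 1 := by
  apply Nat.cast_injective (R := ℤ)
  push_cast
  have hS : (∑ k ∈ range (2*n+1), ((2*n).choose k : ℤ) * 2^k) = 3^(2*n) := by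
    have h := add_pow (2 : ℤ) 1 (2*n)
    norm_num at h
    rw [h]
    exact sum_congr rfl fun k _ => by ring
  have hT : (∑ k ∈ range (2*n+1), ((2*n).choose k : ℤ) * 2^k * (-1)^k) = 1 := by
    have h := add_pow (2 : ℤ) (-1) (2*n)
    norm_num at h
    refine Eq.trans ?_ h.symm
    refine sum_congr rfl fun k hk => ?_
    have hk' : k ≤ 2*n := Nat.lt_succ_iff.mp (mem_range.mp hk)
    have hpow : (-1 : ℤ)^(2*n - k) = (-1)^k := by
      have h1 : (-1 : ℤ)^(2*n - k) * (-1)^k = 1 := by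
        rw [← pow_add, Nat.sub_add_cancel hk']
        simp [pow_mul]
      have h2 : ((-1 : ℤ)^k)*((-1:ℤ)^k) = 1 := by
        rw [← pow_add, ← two_mul]; simp [pow_mul]
      calc (-1 : ℤ)^(2*n-k) = (-1:ℤ)^(2*n-k) * ((-1)^k * (-1)^k) := by rw [h2]; ring
        _ = (-1)^k := by rw [← mul_assoc, h1]; ring
    rw [hpow]; ring
  have himg : (range (2*n+1)).filter (fun k => Even k) = (range (n+1)).image (fun t => 2*t) := by
    ext k
    rw [Finset.mem_filter]; simp only [Finset.mem_range, Finset.mem_image, Even]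
    constructor
    · rintro ⟨h1, t, rfl⟩; exact ⟨t, by omega, by omega⟩
    · rintro ⟨t, h1, rfl⟩; exact ⟨by omega, t, by omega⟩
  have hkey : (∑ k ∈ range (2*n+1), ((2*n).choose k : ℤ) * 2^k * (1 + (-1)^k))
      = 2 * ∑ t ∈ range (n+1), ((2*n).choose (2*t) : ℤ) * 4^t := by
    rw [← sum_filter_add_sum_filter_not (range (2*n+1)) (fun k => Even k)]
    have hodd : (∑ k ∈ (range (2*n+1)).filter (fun k => ¬ Even k),
        ((2*n).choose k : ℤ) * 2^k * (1 + (-1)^k)) = 0 := by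
      apply sum_eq_zero
      intro k hk
      have : Odd k := Nat.not_even_iff_odd.mp (mem_filter.mp hk).2
      rw [this.neg_one_pow]; ring
    rw [hodd, add_zero, himg, sum_image (fun a _ b _ h => by omega)]
    rw [mul_sum]
    refine sum_congr rfl fun t _ => ?_
    rw [Even.neg_one_pow ⟨t, by ring⟩,
      show ((2:ℤ))^(2*t) = 4^t by rw [pow_mul]; norm_num]
    ring
  have hfin : (3:ℤ)^(2*n) + 1 = 2 * ∑ t ∈ range (n+1), ((2*n).choose (2*t) : ℤ) * 4^t := by
    rw [← hS, ← hT, ← hkey, ← sum_add_distrib]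
    exact sum_congr rfl fun k _ => by ring
  rw [show (9:ℤ)^n = 3^(2*n) by rw [pow_mul]; norm_num]
  linarith [hfin]

lemma motz_le (n : ℕ) :
    (∑ t ∈ range (2*n+1), (2*n).choose (2*t) * catalan t) ≤ 9^n := by
  have h1 : (∑ t ∈ range (2*n+1), (2*n).choose (2*t) * catalan t)
      = ∑ t ∈ range (n+1), (2*n).choose (2*t) * catalan t := by
    refine (sum_subset (by intro x hx; simp at *; omega) ?_).symm
    intro t ht hnt
    have : 2*n < 2*t := by simp at *; omega
    simp [Nat.choose_eq_zero_of_lt this]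
  have h2 : ∀ t, catalan t ≤ 4^t := by
    intro t
    calc catalan t ≤ (t+1) * catalan t := Nat.le_mul_of_pos_left _ (by omega)
      _ = t.centralBinom := succ_mul_catalan_eq_centralBinom t
      _ = (2*t).choose t := rfl
      _ ≤ 2^(2*t) := by
          calc (2*t).choose t ≤ ∑ k ∈ range (2*t+1), (2*t).choose k :=
                single_le_sum (fun k _ => Nat.zero_le _) (by simp; omega)
            _ = 2^(2*t) := Nat.sum_range_choose (2*t)
      _ = 4^t := by rw [pow_mul]; norm_num
  have h3 : 2 * (∑ t ∈ range (n+1), (2*n).choose (2*t) * catalan t) ≤ 9^n + 1 := by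
    rw [← even_sum_pow n]
    have := sum_le_sum (fun t (_ : t ∈ range (n+1)) =>
      Nat.mul_le_mul_left ((2*n).choose (2*t)) (h2 t))
    omega
  have h4 : 1 ≤ 9^n := Nat.one_le_pow _ _ (by omega)
  omega

lemma four_pow_le (t : ℕ) : 4^t ≤ (2*t+1) * ((t+1) * catalan t) := by
  rw [succ_mul_catalan_eq_centralBinom t]
  rcases Nat.eq_zero_or_pos t with rfl | ht
  · simp [Nat.centralBinom]
  · calc 4^t ≤ 2*t * t.centralBinom := Nat.four_pow_le_two_mul_self_mul_centralBinom t ht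
      _ ≤ (2*t+1) * t.centralBinom := Nat.mul_le_mul_right _ (by omega)

lemma le_motz (n : ℕ) :
    9^n ≤ 2 * ((2*n+1) * (n+1)) * (∑ t ∈ range (2*n+1), (2*n).choose (2*t) * catalan t) := by
  have h1 : ∑ t ∈ range (n+1), (2*n).choose (2*t) * catalan t
      ≤ ∑ t ∈ range (2*n+1), (2*n).choose (2*t) * catalan t :=
    sum_le_sum_of_subset (by intro x hx; simp at *; omega)
  have h2 : (∑ t ∈ range (n+1), (2*n).choose (2*t) * 4^t)
      ≤ (2*n+1) * (n+1) * ∑ t ∈ range (n+1), (2*n).choose (2*t) * catalan t := by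
    rw [mul_sum]
    refine sum_le_sum fun t ht => ?_
    have ht' : t ≤ n := by simp at ht; omega
    calc (2*n).choose (2*t) * 4^t ≤ (2*n).choose (2*t) * ((2*t+1) * ((t+1) * catalan t)) :=
          Nat.mul_le_mul_left _ (four_pow_le t)
      _ ≤ (2*n).choose (2*t) * ((2*n+1) * ((n+1) * catalan t)) := by
          apply Nat.mul_le_mul_left
          exact Nat.mul_le_mul (by omega) (Nat.mul_le_mul_right _ (by omega))
      _ = (2*n+1) * (n+1) * ((2*n).choose (2*t) * catalan t) := by ring
  have h3 := even_sum_pow n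
  calc 9^n ≤ 9^n + 1 := by omega
    _ = 2 * (∑ t ∈ range (n+1), (2*n).choose (2*t) * 4^t) := h3.symm
    _ ≤ 2 * ((2*n+1) * (n+1) * ∑ t ∈ range (n+1), (2*n).choose (2*t) * catalan t) :=
        Nat.mul_le_mul_left 2 h2
    _ ≤ 2 * ((2*n+1) * (n+1)) * (∑ t ∈ range (2*n+1), (2*n).choose (2*t) * catalan t) := by
        rw [← mul_assoc]
        exact Nat.mul_le_mul_left _ h1

open Filter Real in
lemma nat_mul_rpow_inv_tendsto (a : ℝ) (ha : 0 < a) :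
    Tendsto (fun n : ℕ => (a * n) ^ ((n : ℝ)⁻¹)) atTop (nhds 1) := by
  have h1 : Tendsto (fun n : ℕ => a ^ ((n : ℝ)⁻¹)) atTop (nhds 1) := by
    have := (tendsto_const_nhds (x := a) (f := atTop (α := ℕ))).rpow
      tendsto_inv_atTop_nhds_zero_nat (Or.inl (ne_of_gt ha))
    simpa using this
  have h2 : Tendsto (fun n : ℕ => (n : ℝ) ^ ((n : ℝ)⁻¹)) atTop (nhds 1) := by
    have := tendsto_rpow_div.comp (tendsto_natCast_atTop_atTop (R := ℝ))
    simpa [Function.comp_def, one_div] using this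
  have h3 := h1.mul h2
  rw [one_mul] at h3
  apply h3.congr'
  filter_upwards [eventually_gt_atTop 0] with n hn
  rw [← Real.mul_rpow (le_of_lt ha) (Nat.cast_nonneg n)]

open Filter Real in
lemma c_root_tendsto :
    Tendsto (fun n : ℕ => ((2*((2*n+1)*(n+1)) : ℕ) : ℝ) ^ ((n : ℝ)⁻¹)) atTop (nhds 1) := by
  have hup : Tendsto (fun n : ℕ => ((12 * n : ℝ) ^ ((n : ℝ)⁻¹))^2) atTop (nhds 1) := by
    have := (nat_mul_rpow_inv_tendsto 12 (by norm_num)).pow 2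
    simpa using this
  refine tendsto_of_tendsto_of_tendsto_of_le_of_le' tendsto_const_nhds hup ?_ ?_
  · filter_upwards [eventually_gt_atTop 0] with n hn
    apply Real.one_le_rpow
    · have : (1:ℕ) ≤ 2*((2*n+1)*(n+1)) := by nlinarith
      exact_mod_cast this
    · positivity
  · filter_upwards [eventually_gt_atTop 0] with n hn
    have hb : ((2*((2*n+1)*(n+1)) : ℕ) : ℝ) ≤ (12*n) * (12*n) := by
      have : (2*((2*n+1)*(n+1)) : ℕ) ≤ (12*n) * (12*n) := by nlinarith
      exact_mod_cast this
    calc ((2*((2*n+1)*(n+1)) : ℕ) : ℝ) ^ ((n : ℝ)⁻¹) ≤ ((12*n) * (12*n) : ℝ) ^ ((n : ℝ)⁻¹) :=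
          Real.rpow_le_rpow (by positivity) hb (by positivity)
      _ = ((12 * n : ℝ) ^ ((n : ℝ)⁻¹))^2 := by
          rw [Real.mul_rpow (by positivity) (by positivity), sq]


open Filter Real

/-- The n-th root of the 2n-th Motzkin number converges to 9. -/
theorem motzkin_two_n_root_tendsto_nine :
    Filter.Tendsto
      (fun n : ℕ =>
        ((∑ t ∈ Finset.range (2*n+1), (2*n).choose (2*t) * catalan t : ℕ) : ℝ) ^ ((n : ℝ)⁻¹))
      Filter.atTop (nhds 9) := by
  have hlow : Tendsto (fun n : ℕ =>
      9 / ((2*((2*n+1)*(n+1)) : ℕ) : ℝ) ^ ((n:ℝ)⁻¹)) atTop (nhds 9) := by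
    have h := Tendsto.div (tendsto_const_nhds (x := (9:ℝ)) (f := atTop (α := ℕ)))
      c_root_tendsto one_ne_zero
    simpa [Pi.div_def] using h
  refine tendsto_of_tendsto_of_tendsto_of_le_of_le' hlow tendsto_const_nhds ?_ ?_
  · filter_upwards [eventually_gt_atTop 0] with n hn
    have hn' : ((n:ℝ)) ≠ 0 := Nat.cast_ne_zero.mpr hn.ne'
    have h9 : ((9:ℝ)^(n:ℕ)) ^ ((n:ℝ)⁻¹) = 9 := by
      rw [← Real.rpow_natCast 9 n, ← Real.rpow_mul (by norm_num), mul_inv_cancel₀ hn',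
        Real.rpow_one]
    have hcn : (0:ℕ) < 2*((2*n+1)*(n+1)) := by positivity
    have hc : (0:ℝ) < ((2*((2*n+1)*(n+1)) : ℕ) : ℝ) := by exact_mod_cast hcn
    have hbR : (9:ℝ)^n ≤ ((2*((2*n+1)*(n+1)):ℕ):ℝ) *
        ((∑ t ∈ Finset.range (2*n+1), (2*n).choose (2*t) * catalan t : ℕ) : ℝ) := by
      exact_mod_cast le_motz n
    have hdiv : (9:ℝ)^n / ((2*((2*n+1)*(n+1)):ℕ):ℝ)
        ≤ ((∑ t ∈ Finset.range (2*n+1), (2*n).choose (2*t) * catalan t : ℕ) : ℝ) :=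
      (div_le_iff₀ hc).mpr (by linarith)
    calc 9 / ((2*((2*n+1)*(n+1)) : ℕ) : ℝ) ^ ((n:ℝ)⁻¹)
        = ((9:ℝ)^(n:ℕ)) ^ ((n:ℝ)⁻¹) / ((2*((2*n+1)*(n+1)) : ℕ) : ℝ) ^ ((n:ℝ)⁻¹) := by rw [h9]
      _ = ((9:ℝ)^n / ((2*((2*n+1)*(n+1)):ℕ):ℝ)) ^ ((n:ℝ)⁻¹) :=
          (Real.div_rpow (by positivity) (le_of_lt hc) _).symm
      _ ≤ ((∑ t ∈ Finset.range (2*n+1), (2*n).choose (2*t) * catalan t : ℕ) : ℝ) ^ ((n:ℝ)⁻¹) :=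
          Real.rpow_le_rpow (by positivity) hdiv (by positivity)
  · filter_upwards [eventually_gt_atTop 0] with n hn
    have hn' : ((n:ℝ)) ≠ 0 := Nat.cast_ne_zero.mpr hn.ne'
    have h9 : ((9:ℝ)^(n:ℕ)) ^ ((n:ℝ)⁻¹) = 9 := by
      rw [← Real.rpow_natCast 9 n, ← Real.rpow_mul (by norm_num), mul_inv_cancel₀ hn',
        Real.rpow_one]
    have hbR : ((∑ t ∈ Finset.range (2*n+1), (2*n).choose (2*t) * catalan t : ℕ) : ℝ)
        ≤ (9:ℝ)^n := by exact_mod_cast motz_le n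
    calc ((∑ t ∈ Finset.range (2*n+1), (2*n).choose (2*t) * catalan t : ℕ) : ℝ) ^ ((n:ℝ)⁻¹)
        ≤ ((9:ℝ)^(n:ℕ)) ^ ((n:ℝ)⁻¹) := Real.rpow_le_rpow (by positivity) hbR (by positivity)
      _ = 9 := h9
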